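/- Assume 𝒜 is smooth and let ε := max{i ∈ ℕ : {0, 1, …, i} ⊆ 𝒜 and {α − i, …, α} ⊆ 𝒜} (so ε ≥ 1). Then reg(𝒜) ≤ ⌊(λ(𝒜) − 1)/ε⌋ + 2, where reg(𝒜) := min{m ≥ 1 : m𝒜 is full} and the floor ⌊·⌋ is taken in ℤ (so that the bound equals 1 when λ(𝒜) = 0). -/

import Mathlib

open scoped Pointwise

/-- The `m`-fold sumset of a finite set `A ⊆ ℕ`, with `0 • A = {0}`. -/
def sumset (A : Finset ℕ) : ℕ → Finset ℕ
  | 0 => {0}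
  | m + 1 => sumset A m + A

/-- A subset of `ℕ` is full iff it equals `{0, 1, …, n}` for some `n`. -/
def IsFull (B : Finset ℕ) : Prop := ∃ n : ℕ, B = Finset.Iic n

/-- `{i, …, j}` is a gap of `B`: disjoint from `B`, with `i - 1 ∈ B` and `j + 1 ∈ B`. -/
def IsGap (B : Finset ℕ) (i j : ℕ) : Prop :=
  1 ≤ i ∧ i ≤ j ∧ (∀ k, i ≤ k → k ≤ j → k ∉ B) ∧ i - 1 ∈ B ∧ j + 1 ∈ B

/-- `λ(B)`: the maximal length of a gap of `B` (`0` if there are no gaps). -/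
noncomputable def gapLen (B : Finset ℕ) : ℕ :=
  sSup {n | ∃ i j, IsGap B i j ∧ n = j - i + 1}

/-- Property `(P₁)`. -/
def P1 (A : Finset ℕ) (α : ℕ) : Prop :=
  ∀ m : ℕ, ¬ IsFull (sumset A m) → ¬ IsFull (sumset A m + ({0, α} : Finset ℕ))

/-- Property `(P₂)`. -/
def P2 (A : Finset ℕ) (α : ℕ) : Prop :=
  ∀ m : ℕ, ¬ IsFull (sumset A m) →
    ¬ ((∀ k, k ≤ α → k ∈ sumset A m) ∧
       (∀ k, (m - 1) * α ≤ k → k ≤ m * α → k ∈ sumset A m))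

/-- The combinatorial reduction number `r(𝒜)`. -/
noncomputable def rA (A : Finset ℕ) (α : ℕ) : ℕ :=
  sInf {r : ℕ | sumset A (r + 1) = ({0, α} : Finset ℕ) + sumset A r}

/-- The combinatorial regularity `reg(𝒜)`. -/
noncomputable def regA (A : Finset ℕ) : ℕ :=
  sInf {m : ℕ | 1 ≤ m ∧ IsFull (sumset A m)}

/-- Sums of interval subsets: if `[a,b] ⊆ A`, then `[j*a, j*b] ⊆ sumset A j`. -/
lemma interval_sum (A : Finset ℕ) (a b : ℕ) (hab : a ≤ b)
    (hsub : ∀ t, a ≤ t → t ≤ b → t ∈ A) :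
    ∀ j k, j * a ≤ k → k ≤ j * b → k ∈ sumset A j := by
  intro j
  induction j with
  | zero =>
    intro k h1 h2
    simp only [Nat.zero_mul] at h1 h2
    show k ∈ ({0} : Finset ℕ)
    simp
    omega
  | succ j ih =>
    intro k h1 h2
    have hja : j * a ≤ j * b := Nat.mul_le_mul_left j hab
    set c := min b (k - j * a) with hc
    have hck : a ≤ c ∧ c ≤ b ∧ c ≤ k ∧ j * a ≤ k - c ∧ k - c ≤ j * b := by
      constructor
      · have : (j+1) * a ≤ k := h1
        have : j * a + a ≤ k := by rw [Nat.succ_mul] at h1; omega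
        omega
      refine ⟨min_le_left _ _, ?_, ?_, ?_⟩
      · have : (j+1) * a ≤ k := h1
        rw [Nat.succ_mul] at this
        omega
      · rcases le_total b (k - j * a) with h | h
        · have hcb : c = b := by omega
          rw [Nat.succ_mul] at h1
          omega
        · have hcc : c = k - j * a := by omega
          rw [Nat.succ_mul] at h1
          omega
      · rcases le_total b (k - j * a) with h | h
        · have hcb : c = b := by omega
          rw [Nat.succ_mul] at h2
          omega
        · have hcc : c = k - j * a := by omega
          rw [Nat.succ_mul] at h1
          omega
    obtain ⟨h3, h4, h5, h6, h7⟩ := hck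
    show k ∈ sumset A j + A
    rw [Finset.mem_add]
    exact ⟨k - c, ih _ h6 h7, c, hsub c h3 h4, by omega⟩

/-- Adding memberships of sumsets. -/
lemma sumset_add_mem (A : Finset ℕ) {p q x y : ℕ}
    (hx : x ∈ sumset A p) (hy : y ∈ sumset A q) : x + y ∈ sumset A (p + q) := by
  induction q generalizing y with
  | zero =>
    simp only [sumset, Finset.mem_singleton] at hy
    subst hy; simpa using hx
  | succ q ih =>
    rw [show sumset A (q+1) = sumset A q + A from rfl, Finset.mem_add] at hy
    obtain ⟨y', hy', z, hz, rfl⟩ := hy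
    have := ih hy'
    show x + (y' + z) ∈ sumset A (p + q) + A
    rw [Finset.mem_add]
    exact ⟨x + y', this, z, hz, by ring⟩

/-- Upper bound for sumset elements. -/
lemma sumset_le (A : Finset ℕ) (hne : A.Nonempty) (m x : ℕ) (hx : x ∈ sumset A m) :
    x ≤ m * A.max' hne := by
  induction m generalizing x with
  | zero => simp [sumset] at hx; omega
  | succ m ih =>
    rw [show sumset A (m+1) = sumset A m + A from rfl, Finset.mem_add] at hx
    obtain ⟨y, hy, z, hz, rfl⟩ := hx
    have h1 := ih y hy
    have h2 := A.le_max' z hz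
    rw [Nat.succ_mul]
    omega

/-- If an interval of length `gapLen B + 1` inside `[0, α]` missed `B`, there would be
a longer gap. -/
lemma exists_mem_of_interval (B : Finset ℕ) (hne : B.Nonempty) (h0 : 0 ∈ B)
    (α : ℕ) (hα : α = B.max' hne) (u : ℕ) (hu : u + gapLen B ≤ α) :
    ∃ a ∈ B, u ≤ a ∧ a ≤ u + gapLen B := by
  by_contra hcon
  push_neg at hcon
  have hmiss : ∀ k, u ≤ k → k ≤ u + gapLen B → k ∉ B := by
    intro k h1 h2 hk
    exact absurd h2 (not_le.mpr (hcon k hk h1))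
  have hαB : α ∈ B := hα ▸ B.max'_mem hne
  have hu1 : 1 ≤ u := by
    by_contra h
    exact hmiss 0 (by omega) (by omega) h0
  have huα : u + gapLen B < α := by
    rcases lt_or_eq_of_le hu with h | h
    · exact h
    · exact absurd hαB (h ▸ hmiss _ (by omega) le_rfl)
  -- left endpoint
  set S1 : Set ℕ := {t | ∀ k, t ≤ k → k ≤ u + gapLen B → k ∉ B} with hS1
  have hS1ne : u ∈ S1 := hmiss
  set i := sInf S1 with hi
  have hiS : i ∈ S1 := Nat.sInf_mem ⟨u, hS1ne⟩
  have hiu : i ≤ u := Nat.sInf_le hS1ne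
  have hi1 : 1 ≤ i := by
    rcases Nat.eq_zero_or_pos i with h | h
    · exact absurd h0 (hiS 0 (by omega) (by omega))
    · exact h
  have hipred : i - 1 ∈ B := by
    have : ¬ (i - 1 ∈ S1) := fun h => absurd (Nat.sInf_le h) (by omega)
    rw [hS1] at this
    simp only [Set.mem_setOf_eq] at this
    push_neg at this
    obtain ⟨k, hk1, hk2, hk3⟩ := this
    rcases lt_or_ge k i with h | h
    · have : k = i - 1 := by omega
      rwa [← this]
    · exact absurd hk3 (hiS k h hk2)
  -- right endpoint
  set S2 : Set ℕ := {t | u + gapLen B ≤ t ∧ t + 1 ∈ B} with hS2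
  have hS2ne : α - 1 ∈ S2 := by
    constructor
    · omega
    · have : α - 1 + 1 = α := by omega
      rw [this]; exact hαB
  set j := sInf S2 with hj
  have hjS : j ∈ S2 := Nat.sInf_mem ⟨_, hS2ne⟩
  have hjge : u + gapLen B ≤ j := hjS.1
  have hjB : j + 1 ∈ B := hjS.2
  have hgap : IsGap B i j := by
    refine ⟨hi1, by omega, ?_, hipred, hjB⟩
    intro k hk1 hk2 hkB
    rcases le_or_gt k (u + gapLen B) with h | h
    · exact hiS k hk1 h hkB
    · have hk : k - 1 + 1 = k := by omega
      have hmem2 : k - 1 ∈ S2 := by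
        refine ⟨by omega, ?_⟩
        rw [hk]
        exact hkB
      have := Nat.sInf_le hmem2
      omega
  have hbdd : BddAbove {n | ∃ i j, IsGap B i j ∧ n = j - i + 1} := by
    refine ⟨α, ?_⟩
    rintro n ⟨i', j', ⟨_, _, _, _, hj'B⟩, rfl⟩
    have := B.le_max' _ hj'B
    rw [← hα] at this
    omega
  have hmem : j - i + 1 ∈ {n | ∃ i j, IsGap B i j ∧ n = j - i + 1} := ⟨i, j, hgap, rfl⟩
  have := le_csSup hbdd hmem
  have : j - i + 1 ≤ gapLen B := this
  omega

theorem stmt_17 (𝒜 : Finset ℕ) (hne : 𝒜.Nonempty) (h0 : 0 ∈ 𝒜)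
    (α : ℕ) (hα : α = 𝒜.max' hne) (hα2 : 2 ≤ α)
    (h1 : 1 ∈ 𝒜) (hαm1 : α - 1 ∈ 𝒜)
    (ε : ℕ)
    (hε : ε = sSup {i : ℕ | (∀ k, k ≤ i → k ∈ 𝒜) ∧ (∀ k, α - i ≤ k → k ≤ α → k ∈ 𝒜)})
    (hε1 : 1 ≤ ε) :
    (regA 𝒜 : ℤ) ≤ Int.fdiv ((gapLen 𝒜 : ℤ) - 1) (ε : ℤ) + 2 := by
  have hαA : α ∈ 𝒜 := hα ▸ 𝒜.max'_mem hne
  -- ε satisfies the defining properties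
  have hεprop : (∀ k, k ≤ ε → k ∈ 𝒜) ∧ (∀ k, α - ε ≤ k → k ≤ α → k ∈ 𝒜) := by
    have hS : ε ∈ {i : ℕ | (∀ k, k ≤ i → k ∈ 𝒜) ∧ (∀ k, α - i ≤ k → k ≤ α → k ∈ 𝒜)} := by
      rw [hε]
      apply Nat.sSup_mem
      · exact ⟨0, fun k hk => by simpa [Nat.le_zero.mp hk], fun k hk1 hk2 => by
          have : k = α := by omega
          rwa [this]⟩
      · refine ⟨α, ?_⟩
        rintro i ⟨hlow, _⟩
        have : i ∈ 𝒜 := hlow i le_rfl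
        have := 𝒜.le_max' i this
        omega
    exact hS
  obtain ⟨hlow, hhigh⟩ := hεprop
  have hεα : ε ≤ α := by
    have := 𝒜.le_max' ε (hlow ε le_rfl)
    omega
  obtain ⟨lam, hlam⟩ : ∃ l, l = gapLen 𝒜 := ⟨_, rfl⟩
  -- fullness of sumset for enough summands
  have full : ∀ p : ℕ, lam ≤ p * ε → sumset 𝒜 (p + 1) = Finset.Iic ((p + 1) * α) := by
    intro p hp
    ext n
    simp only [Finset.mem_Iic]
    constructor
    · intro hn
      have := sumset_le 𝒜 hne (p+1) n hn
      rw [← hα] at this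
      exact this
    · intro hn
      -- pick block index j
      set j := min (n / α) p with hjdef
      have hd := Nat.div_add_mod n α
      rw [Nat.mul_comm] at hd
      have hm : n % α < α := Nat.mod_lt _ (by omega)
      have hj1 : j * α ≤ n := by
        rcases min_cases (n / α) p with ⟨h, _⟩ | ⟨h, hle⟩
        · rw [hjdef, h]; omega
        · rw [hjdef, h]
          have : p * α ≤ n / α * α := Nat.mul_le_mul_right α (le_of_lt hle)
          omega
      have hjp : j ≤ p := min_le_right _ _
      have hj2 : n ≤ j * α + α := by
        rcases min_cases (n / α) p with ⟨h, _⟩ | ⟨h, _⟩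
        · rw [hjdef, h]; omega
        · rw [hjdef, h]
          have h1 : n ≤ (p + 1) * α := hn
          have h2 : (p + 1) * α = p * α + α := by ring
          omega
      set t := n - j * α with ht
      have htα : t ≤ α := by omega
      -- find a ∈ 𝒜 in window [t - (p-j)ε, min α (t + jε)]
      have hjε : j * ε ≤ j * α := Nat.mul_le_mul_left j hεα
      have hexa : ∃ a ∈ 𝒜, t - (p - j) * ε ≤ a ∧ a ≤ min α (t + j * ε) := by
        rcases le_or_gt t ((p - j) * ε) with hL | hL
        · exact ⟨0, h0, by omega, by omega⟩
        rcases le_or_gt α (t + j * ε) with hR | hR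
        · exact ⟨α, hαA, by omega, by omega⟩
        -- middle case: window has length p*ε + 1 ≥ lam + 1 and lies in [0, α]
        have hlen : (t - (p - j) * ε) + lam ≤ α := by
          have h1 : j * ε + (p - j) * ε = p * ε := by
            rw [← Nat.add_mul]
            congr 1
            omega
          omega
        rw [hlam] at hlen
        obtain ⟨a, haA, ha1, ha2⟩ := exists_mem_of_interval 𝒜 hne h0 α hα _ hlen
        refine ⟨a, haA, ha1, ?_⟩
        have h1 : j * ε + (p - j) * ε = p * ε := by
          rw [← Nat.add_mul]; congr 1; omega
        rw [← hlam] at ha2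
        rw [← hlam] at hlen
        omega
      obtain ⟨a, haA, ha1, ha2⟩ := hexa
      -- s := n - a lies in [j(α-ε), jα + (p-j)ε]
      set s := n - a with hs
      have han : a ≤ n := by
        have : a ≤ t + j * ε := le_trans ha2 (min_le_right _ _)
        omega
      have hs1 : j * α - j * ε ≤ s := by
        have : a ≤ t + j * ε := le_trans ha2 (min_le_right _ _)
        omega
      have hs2 : s ≤ j * α + (p - j) * ε := by omega
      -- split s into top part and bottom part
      have hsmem : s ∈ sumset 𝒜 p := by
        have htop : ∀ k, j * (α - ε) ≤ k → k ≤ j * α → k ∈ sumset 𝒜 j :=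
          interval_sum 𝒜 (α - ε) α (by omega)
            (fun u hu1 hu2 => hhigh u hu1 hu2) j
        have hbot : ∀ k, k ≤ (p - j) * ε → k ∈ sumset 𝒜 (p - j) := fun k hk =>
          interval_sum 𝒜 0 ε (by omega) (fun u _ hu2 => hlow u hu2) (p - j) k (by omega) (by
            calc k ≤ (p - j) * ε := hk)
        have hmulsub : j * (α - ε) = j * α - j * ε := Nat.mul_sub j α ε
        rcases le_or_gt s (j * α) with h | h
        · have h1 : s ∈ sumset 𝒜 j := htop s (by omega) h
          have h2 : (0 : ℕ) ∈ sumset 𝒜 (p - j) := hbot 0 (by omega)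
          have := sumset_add_mem 𝒜 h1 h2
          rw [Nat.add_zero] at this
          have hjpj : j + (p - j) = p := by omega
          rwa [hjpj] at this
        · have h1 : j * α ∈ sumset 𝒜 j := htop (j * α) (by omega) le_rfl
          have h2 : s - j * α ∈ sumset 𝒜 (p - j) := hbot _ (by omega)
          have := sumset_add_mem 𝒜 h1 h2
          have heq : j * α + (s - j * α) = s := by omega
          rw [heq] at this
          have hjpj : j + (p - j) = p := by omega
          rwa [hjpj] at this
      show n ∈ sumset 𝒜 p + 𝒜
      rw [Finset.mem_add]
      exact ⟨s, hsmem, a, haA, by omega⟩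
  -- choose p := (lam + ε - 1) / ε
  obtain ⟨p, hp⟩ : ∃ q, q = (lam + ε - 1) / ε := ⟨_, rfl⟩
  have hpε : lam ≤ p * ε := by
    have hd := Nat.div_add_mod (lam + ε - 1) ε
    rw [Nat.mul_comm] at hd
    have hm : (lam + ε - 1) % ε < ε := Nat.mod_lt _ (by omega)
    rw [hp]
    omega
  have hfull := full p hpε
  have hreg : regA 𝒜 ≤ p + 1 := Nat.sInf_le ⟨by omega, ⟨(p + 1) * α, hfull⟩⟩
  -- compute the RHS
  have hrhs : Int.fdiv ((lam : ℤ) - 1) (ε : ℤ) + 2 = (p : ℤ) + 1 := by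
    rw [Int.fdiv_eq_ediv_of_nonneg _ (by positivity)]
    rcases Nat.eq_zero_or_pos lam with h | h
    · -- lam = 0 : (-1)/ε = -1, p = 0
      have hp0 : p = 0 := by
        rw [hp, h]
        apply Nat.div_eq_of_lt
        omega
      rw [h, hp0]
      have : ((0 : ℕ) : ℤ) - 1 = (ε - 1) + (-1) * ε := by push_cast; ring
      rw [this, Int.add_mul_ediv_right _ _ (by positivity : (0:ℤ) < ε).ne',
        Int.ediv_eq_zero_of_lt (by omega) (by omega)]
      norm_num
    · -- lam ≥ 1 : ((lam - 1 : ℕ)) / ε, and p = (lam - 1)/ε + 1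
      have hcast : (lam : ℤ) - 1 = ((lam - 1 : ℕ) : ℤ) := by omega
      rw [hcast]
      have hdiv : ((lam - 1 : ℕ) : ℤ) / (ε : ℤ) = (((lam - 1) / ε : ℕ) : ℤ) :=
        (Int.natCast_ediv _ _).symm
      rw [hdiv]
      have hpval : p = (lam - 1) / ε + 1 := by
        rw [hp]
        have : lam + ε - 1 = (lam - 1) + ε := by omega
        rw [this, Nat.add_div_right _ (by omega)]
      rw [hpval]
      push_cast
      ring
  rw [hlam] at hrhs
  rw [hrhs]
  exact_mod_cast hreg
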